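/- For every integer l ≥ 165 and every z ∈ (0,1), I(z) < 0. -/

import Mathlib

set_option maxHeartbeats 1000000

open Real

/-- `H(u,z)` for the `(l,3,3)` MN codes. -/
noncomputable def Hfun (l : ℕ) (u z : ℝ) : ℝ :=
  (u + 3 * z^l / (l:ℝ) - (1-z) * (1 - 4 * z^(l-1)))^3
    + 6 * (1-z) * (1 - z^(l-1)) * (u + 3 * z^l / (l:ℝ) - (1-z) * (1 - 4 * z^(l-1)))
    - (1-z) * (1 - z^(l-1)) ^ (-2 : ℤ)
    + 8 * (1-z)^2 * (1 - z^(l-1))^5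

/-- `I(z) := l³(1-z^{l-1})²/((1-z)z²) · H(0,z)`. -/
noncomputable def Ifun (l : ℕ) (z : ℝ) : ℝ :=
  (l:ℝ)^3 * (1 - z^(l-1))^2 / ((1-z) * z^2) * Hfun l 0 z

lemma cube_le' {x y : ℝ} (h : x ≤ y) : x^3 ≤ y^3 := by
  nlinarith [sq_nonneg (x+y), sq_nonneg x, sq_nonneg y]

lemma mono_aux (x y s w : ℝ) (hxy : x ≤ y) (hs : 0 ≤ s) (hw : 0 ≤ w) :
    x^3*w^2 + 6*s*w^3*x ≤ y^3*w^2 + 6*s*w^3*y := by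
  have h2 : 0 ≤ x^2 + x*y + y^2 := by nlinarith [sq_nonneg (x+y), sq_nonneg x, sq_nonneg y]
  nlinarith [mul_nonneg (mul_nonneg (sub_nonneg.2 hxy) h2) (sq_nonneg w),
    mul_nonneg (mul_nonneg (mul_nonneg hs hw) (mul_nonneg hw hw)) (sub_nonneg.2 hxy)]

lemma hP1aux (t : ℝ) (ht : 0 ≤ t) (ht1 : t ≤ 1) :
    (-993/3025)*t + (1008/3025)*t^2 + (-357/3025)*t^3 + (12/3025)*t^4 ≤ 0 := by
  nlinarith [mul_nonneg ht ht, mul_nonneg (mul_nonneg ht ht) ht, sq_nonneg t, sq_nonneg (t*(1-t))]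

lemma hP3aux (t : ℝ) (ht : 0 ≤ t) (ht1 : t ≤ 1) :
    0 ≤ 14 - 73*t + 172*t^2 - 176*t^3 + 64*t^4 := by
  nlinarith [sq_nonneg (t*(1-t)), sq_nonneg (1-t), sq_nonneg t, sq_nonneg (2*t-1),
    mul_nonneg ht (sub_nonneg.2 ht1), sq_nonneg (8*t^2-11*t+2)]

lemma hP23aux (t : ℝ) (ht : 0 ≤ t) (ht1 : t ≤ 1) :
    3/55 + (49/11)*t - (141/5)*t^2 + (856/11)*t^3 - (5672/55)*t^4 + 56*t^5 - 8*t^6 ≤ 1/2 := by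
  nlinarith [sq_nonneg (t*(1-t)), sq_nonneg (t^2*(1-t)), sq_nonneg (t*(1-t)^2),
    mul_nonneg ht (sub_nonneg.2 ht1), sq_nonneg (2*t-1), sq_nonneg (t-1/5),
    mul_nonneg (mul_nonneg ht ht) (sub_nonneg.2 ht1), sq_nonneg (t*(2*t-1)),
    sq_nonneg ((1-t)*(2*t-1)), sq_nonneg (t^2*(2*t-1))]

lemma R_le (s t : ℝ) (hs : 1/20 ≤ s) (hs1 : s ≤ 1) (ht : 0 ≤ t) (ht1 : t ≤ 1) :
    (1/166375)*t^2 + (-2/166375)*t^3 + (1/166375)*t^4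
    + (6/55)*s + (-993/3025)*s*t + (1008/3025)*s*t^2 + (-357/3025)*s*t^3 + (12/3025)*s*t^4
    + (-767/55)*s^2 + (852/11)*s^2*t + (-1001/5)*s^2*t^2 + (2792/11)*s^2*t^3
    + (-9192/55)*s^2*t^4 + 56*s^2*t^5 + (-8)*s^2*t^6
    + 14*s^3 + (-73)*s^3*t + 172*s^3*t^2 + (-176)*s^3*t^3 + 64*s^3*t^4 ≤ s := by
  have hs0 : (0:ℝ) ≤ s := by linarith
  have a1 : s * ((-993/3025)*t + (1008/3025)*t^2 + (-357/3025)*t^3 + (12/3025)*t^4) ≤ 0 :=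
    mul_nonpos_of_nonneg_of_nonpos hs0 (hP1aux t ht ht1)
  have a3 : s^3 * (14 - 73*t + 172*t^2 - 176*t^3 + 64*t^4)
      ≤ s^2 * (14 - 73*t + 172*t^2 - 176*t^3 + 64*t^4) := by
    have h1 : 0 ≤ s^2 - s^3 := by nlinarith
    nlinarith [mul_nonneg h1 (hP3aux t ht ht1)]
  have a23 : s^2 * (3/55 + (49/11)*t - (141/5)*t^2 + (856/11)*t^3 - (5672/55)*t^4 + 56*t^5 - 8*t^6)
      ≤ s^2 * (1/2) := mul_le_mul_of_nonneg_left (hP23aux t ht ht1) (sq_nonneg s)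
  have asq : s^2 * (1/2) ≤ s * (1/2) := by nlinarith
  have a0 : (1/166375)*t^2 + (-2/166375)*t^3 + (1/166375)*t^4 ≤ 1/2662000 := by
    have hx : t*(1-t) ≤ 1/4 := by nlinarith [sq_nonneg (2*t-1)]
    have hx0 : 0 ≤ t*(1-t) := mul_nonneg ht (by linarith)
    have hx2 : (t*(1-t))^2 ≤ 1/16 := by nlinarith
    nlinarith [hx2]
  linarith [a1, a3, a23, asq, a0, hs]

lemma caseII (s t w A : ℝ) (hs0 : 0 < s) (hs : s ≤ 1/20) (ht0 : 0 < t) (ht1 : t ≤ 1)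
    (hw0 : 0 < w) (hw1 : w ≤ 1) (hAw : A*w ≤ 7*(s*t)) (hst : s*t ≤ w/164) :
    A^3*w^2 + 6*s*w^3*A - s + 8*s^2*w^7 < 0 := by
  have hst0 : (0:ℝ) ≤ s*t := by positivity
  have hcube : (A*w)^3 ≤ (7*(s*t))^3 := cube_le' hAw
  have h2 : (s*t)^2 ≤ (w/164)^2 := by nlinarith
  have h3 : (s*t)^3 ≤ (s*t)*(w/164)^2 := by nlinarith [mul_le_mul_of_nonneg_left h2 hst0]
  have h3' : (A*w)^3 ≤ (343/26896)*(s*t*w^2) := by nlinarith [hcube, h3]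
  have htw : t*w ≤ 1 := by nlinarith
  have h7 : (343/26896)*(s*t*w^2) ≤ (343/26896)*(s*w) := by
    nlinarith [mul_le_mul_of_nonneg_left htw (mul_nonneg hs0.le hw0.le)]
  have h40 : (0:ℝ) ≤ 6*s*w^3 := by positivity
  have h4 : 6*s*w^3*(A*w) ≤ 42*((s*t)*(s*w^3)) := by
    nlinarith [mul_le_mul_of_nonneg_left hAw h40]
  have hsw3 : (0:ℝ) ≤ s*w^3 := by positivity
  have hw4 : w^4 ≤ w := by
    calc w^4 ≤ w^1 := pow_le_pow_of_le_one hw0.le hw1 (by norm_num)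
    _ = w := pow_one w
  have h5 : 42*((s*t)*(s*w^3)) ≤ (42/164)*(s*w) := by
    have e1 : 42*((s*t)*(s*w^3)) ≤ 42*((w/164)*(s*w^3)) := by
      nlinarith [mul_le_mul_of_nonneg_right hst hsw3]
    have e2 : 42*((w/164)*(s*w^3)) ≤ (42/164)*(s*w) := by
      nlinarith [mul_le_mul_of_nonneg_left hw4 hs0.le]
    linarith
  have hw8 : w^8 ≤ w := by
    calc w^8 ≤ w^1 := pow_le_pow_of_le_one hw0.le hw1 (by norm_num)
    _ = w := pow_one w
  have h6 : 8*s^2*w^8 ≤ (2/5)*(s*w) := by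
    have b1 : 8*s^2*w^8 ≤ 8*(s^2*w) := by
      nlinarith [mul_le_mul_of_nonneg_left hw8 (by positivity : (0:ℝ) ≤ s^2)]
    have b2 : s^2*w ≤ (1/20)*(s*w) := by
      nlinarith [mul_le_mul_of_nonneg_right hs (mul_nonneg hs0.le hw0.le)]
    linarith
  have hsw : 0 < s*w := by positivity
  have hGw : (A^3*w^2 + 6*s*w^3*A - s + 8*s^2*w^7) * w < 0 := by
    have hid : (A^3*w^2 + 6*s*w^3*A - s + 8*s^2*w^7) * w
        = (A*w)^3 + 6*s*w^3*(A*w) - s*w + 8*s^2*w^8 := by ring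
    rw [hid]; linarith
  by_contra h
  push_neg at h
  linarith [mul_nonneg h hw0.le]

lemma caseI (s t A : ℝ) (hs : 1/20 ≤ s) (hs1 : s < 1) (ht0 : 0 < t) (ht1 : t < 1)
    (hAB : A ≤ t/55 - s*(1-4*t)) (htz : t < (1-s)^2) :
    A^3*(1-t)^2 + 6*s*(1-t)^3*A - s + 8*s^2*(1-t)^7 < 0 := by
  have hs0 : (0:ℝ) < s := by linarith
  have hw0 : (0:ℝ) < 1 - t := by linarith
  have hmono := mono_aux A (t/55 - s*(1-4*t)) s (1-t) hAB hs0.le hw0.le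
  have hR := R_le s t hs hs1.le ht0.le ht1.le
  have hid : (t/55 - s*(1-4*t))^3*(1-t)^2 + 6*s*(1-t)^3*(t/55 - s*(1-4*t)) - s + 8*s^2*(1-t)^7
      = -(s*(1-s)^2) + t*((1/166375)*t^2 + (-2/166375)*t^3 + (1/166375)*t^4
        + (6/55)*s + (-993/3025)*s*t + (1008/3025)*s*t^2 + (-357/3025)*s*t^3 + (12/3025)*s*t^4
        + (-767/55)*s^2 + (852/11)*s^2*t + (-1001/5)*s^2*t^2 + (2792/11)*s^2*t^3
        + (-9192/55)*s^2*t^4 + 56*s^2*t^5 + (-8)*s^2*t^6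
        + 14*s^3 + (-73)*s^3*t + 172*s^3*t^2 + (-176)*s^3*t^3 + 64*s^3*t^4) := by
    ring
  have hts := mul_le_mul_of_nonneg_left hR ht0.le
  have hlt : t*s < (1-s)^2*s := mul_lt_mul_of_pos_right htz hs0
  have hfB : (t/55 - s*(1-4*t))^3*(1-t)^2 + 6*s*(1-t)^3*(t/55 - s*(1-4*t)) - s + 8*s^2*(1-t)^7 < 0 := by
    rw [hid]; linarith [hts, hlt]
  linarith [hmono, hfB]

/-- Key polynomial inequality. -/
lemma Gneg (s t u : ℝ) (hs0 : 0 < s) (hs1 : s < 1) (ht0 : 0 < t) (ht1 : t < 1)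
    (hu0 : 0 < u) (hu55 : u ≤ t/55) (huw : u*(1-t) ≤ 3*(t*s)) (hst : 164*(s*t) ≤ 1-t)
    (htz : t < (1-s)^2) :
    (u - s*(1-4*t))^3*(1-t)^2 + 6*s*(1-t)^3*(u - s*(1-4*t)) - s + 8*s^2*(1-t)^7 < 0 := by
  have hw0 : (0:ℝ) < 1 - t := by linarith
  rcases le_or_gt s (1/20) with hcase | hcase
  · have hAw : (u - s*(1-4*t))*(1-t) ≤ 7*(s*t) := by
      nlinarith [huw, mul_nonneg hs0.le hw0.le, mul_nonneg (mul_nonneg hs0.le ht0.le) ht0.le]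
    have hst' : s*t ≤ (1-t)/164 := by linarith
    exact caseII s t (1-t) (u - s*(1-4*t)) hs0 hcase ht0 ht1.le hw0 (by linarith) hAw hst'
  · exact caseI s t (u - s*(1-4*t)) hcase.le hs1 ht0 ht1 (by linarith) htz

/-- `I(z) < 0` on `(0,1)` for `l ≥ 165`. -/
theorem stmt8 (l : ℕ) (hl : 165 ≤ l) (z : ℝ)
    (hz : z ∈ Set.Ioo (0:ℝ) 1) : Ifun l z < 0 := by
  obtain ⟨hz0, hz1⟩ := hz
  have hl0 : 0 < (l:ℝ) := by positivity
  have hl165 : (165:ℝ) ≤ (l:ℝ) := by exact_mod_cast hl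
  have ht0 : 0 < z^(l-1) := pow_pos hz0 _
  have ht1 : z^(l-1) < 1 := pow_lt_one₀ hz0.le hz1 (by omega)
  have hs0 : 0 < 1 - z := by linarith
  have hw0 : 0 < 1 - z^(l-1) := by linarith
  have hu0 : 0 < 3*z^l/(l:ℝ) := by positivity
  have hzl : z^l = z^(l-1) * z := by
    rw [← pow_succ]
    congr 1
    omega
  have hu55 : 3*z^l/(l:ℝ) ≤ z^(l-1)/55 := by
    rw [div_le_div_iff₀ hl0 (by norm_num : (0:ℝ) < 55)]
    have h1 : z^l ≤ z^(l-1) := by rw [hzl]; nlinarith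
    nlinarith [mul_le_mul_of_nonneg_left hl165 ht0.le]
  -- Bernoulli facts with m := l - 1
  have hm_eq : ((l-1 : ℕ) : ℝ) = (l:ℝ) - 1 := by
    rw [Nat.cast_sub (by omega)]
    norm_num
  have hm164 : (164:ℝ) ≤ ((l-1 : ℕ) : ℝ) := by rw [hm_eq]; linarith
  have hm0 : (0:ℝ) ≤ ((l-1 : ℕ) : ℝ) := by positivity
  have hb1 : 1 + ((l-1 : ℕ) : ℝ) * (z - 1) ≤ z^(l-1) := by
    have h := one_add_mul_le_pow (a := z - 1) (by linarith) (l-1)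
    have he : (1 + (z-1)) = z := by ring
    rwa [he] at h
  have hwm : 1 - z^(l-1) ≤ ((l-1 : ℕ) : ℝ) * (1 - z) := by linarith [hb1]
  have hum : (3*z^l/(l:ℝ)) * ((l-1 : ℕ) : ℝ) ≤ 3 * z^(l-1) := by
    rw [hzl, div_mul_eq_mul_div, div_le_iff₀ hl0]
    nlinarith [mul_nonneg (mul_nonneg ht0.le hm0) hs0.le, ht0.le, hm_eq]
  have huw : (3*z^l/(l:ℝ)) * (1 - z^(l-1)) ≤ 3 * (z^(l-1) * (1-z)) := by
    nlinarith [mul_le_mul_of_nonneg_left hwm hu0.le, mul_le_mul_of_nonneg_right hum hs0.le]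
  have hst : 164 * ((1-z) * z^(l-1)) ≤ 1 - z^(l-1) := by
    have ha : (-2:ℝ) ≤ (1-z)/z := by
      have : (0:ℝ) ≤ (1-z)/z := div_nonneg (by linarith) hz0.le
      linarith
    have hb2 : 1 + ((l-1 : ℕ) : ℝ) * ((1-z)/z) ≤ (1/z)^(l-1) := by
      have h := one_add_mul_le_pow (a := (1-z)/z) ha (l-1)
      have he : (1 + (1-z)/z) = 1/z := by field_simp; ring
      rwa [he] at h
    have hkey : z^(l-1) * (1/z)^(l-1) = 1 := by
      rw [← mul_pow]
      have : z * (1/z) = 1 := by field_simp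
      rw [this, one_pow]
    have h1 : z^(l-1) * (1 + ((l-1 : ℕ) : ℝ) * ((1-z)/z)) ≤ 1 := by
      calc z^(l-1) * (1 + ((l-1 : ℕ) : ℝ) * ((1-z)/z))
          ≤ z^(l-1) * (1/z)^(l-1) := mul_le_mul_of_nonneg_left hb2 ht0.le
        _ = 1 := hkey
    have hid : z * (z^(l-1) * (1 + ((l-1 : ℕ) : ℝ) * ((1-z)/z)))
        = z^(l-1) * z + ((l-1 : ℕ) : ℝ) * (z^(l-1) * (1-z)) := by
      field_simp
    have h2 : z^(l-1) * z + ((l-1 : ℕ) : ℝ) * (z^(l-1) * (1-z)) ≤ z := by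
      nlinarith [mul_le_mul_of_nonneg_left h1 hz0.le]
    have h5 : 164 * (z^(l-1) * (1-z)) ≤ ((l-1 : ℕ) : ℝ) * (z^(l-1) * (1-z)) := by
      nlinarith [mul_nonneg ht0.le hs0.le, hm164]
    nlinarith [h2, h5, mul_nonneg hz0.le hw0.le]
  have htz : z^(l-1) < (1 - (1-z))^2 := by
    have he : (1 - (1-z)) = z := by ring
    rw [he]
    exact pow_lt_pow_right_of_lt_one₀ hz0 hz1 (by omega)
  have hG := Gneg (1-z) (z^(l-1)) (3*z^l/(l:ℝ)) hs0 (by linarith) ht0 ht1 hu0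
    (by linarith [hu55]) (by linarith [huw]) (by linarith [hst]) htz
  have hzp : (1 - z^(l-1)) ^ (-2 : ℤ) = ((1 - z^(l-1))^2)⁻¹ := by
    rw [zpow_neg]
    norm_cast
  have hwne : (1 - z^(l-1)) ≠ 0 := ne_of_gt hw0
  have hlne : (l:ℝ) ≠ 0 := ne_of_gt hl0
  have hkeyH : Hfun l 0 z * (1 - z^(l-1))^2
      = (3*z^l/(l:ℝ) - (1-z)*(1-4*z^(l-1)))^3*(1-z^(l-1))^2
        + 6*(1-z)*(1-z^(l-1))^3*(3*z^l/(l:ℝ) - (1-z)*(1-4*z^(l-1)))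
        - (1-z) + 8*(1-z)^2*(1-z^(l-1))^7 := by
    unfold Hfun
    rw [hzp]
    field_simp
    ring
  have hHneg : Hfun l 0 z < 0 := by
    have hlt : Hfun l 0 z * (1 - z^(l-1))^2 < 0 := by
      rw [hkeyH]
      exact hG
    by_contra h
    push_neg at h
    nlinarith [mul_nonneg h (sq_nonneg (1 - z^(l-1)))]
  have hC : 0 < (l:ℝ)^3 * (1 - z^(l-1))^2 / ((1-z) * z^2) := by
    apply div_pos
    · positivity
    · positivity
  exact mul_neg_of_pos_of_neg hC hHneg
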